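/- Let φ(x) = √(α/π) e^{-αx²} with α > 0. Then for all real x, |φ(x) - √(4α/(3π)) Σ_{k∈ℤ} e^{-αk²/3} φ(2x-k)| ≤ ε · φ(x), where ε = θ₃(0, e^{-3π²/(4α)}) - 1. -/

import Mathlib

open Real

open Complex in
lemma summable_gauss {c : ℝ} (hc : 0 < c) :
    Summable fun n : ℤ => Real.exp (-c * (n : ℝ) ^ 2) := by
  have h := summable_pow_mul_jacobiTheta₂_term_bound 0 (T := c / π) (div_pos hc pi_pos) 0
  refine h.congr fun n => ?_
  simp only [pow_zero, one_mul, mul_zero, zero_sub, sub_zero]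
  congr 1
  field_simp
  ring

open Complex in
lemma key (β : ℝ) (hβ : 0 < β) (t : ℝ) :
    |Real.sqrt (β / π) * (∑' k : ℤ, Real.exp (-β * ((k : ℝ) - t) ^ 2)) - 1| ≤
      (∑' n : ℤ, Real.exp (-(π ^ 2 / β) * (n : ℝ) ^ 2)) - 1 := by
  have hπ : (0:ℝ) < π := pi_pos
  have ha : (0:ℝ) < β / π := div_pos hβ hπ
  have H := Complex.tsum_exp_neg_quadratic (a := ((β / π : ℝ) : ℂ))
      (by simpa using ha) ((β * t / π : ℝ) : ℂ)
  have hLHS : (∑' n : ℤ, cexp (-π * ((β / π : ℝ) : ℂ) * (n:ℂ) ^ 2 +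
      2 * π * ((β * t / π : ℝ) : ℂ) * (n:ℂ))) =
      cexp ((β * t ^ 2 : ℝ)) * ∑' k : ℤ, cexp ((-β * ((k : ℝ) - t) ^ 2 : ℝ)) := by
    rw [← tsum_mul_left]
    refine tsum_congr fun n => ?_
    rw [← Complex.exp_add]
    congr 1
    have : (π:ℂ) ≠ 0 := by exact_mod_cast hπ.ne'
    push_cast
    field_simp
    ring
  set c : ℤ → ℂ := fun n => cexp ((-(π ^ 2 / β) * (n:ℝ) ^ 2 : ℝ) + (-(2 * π * t * n) : ℝ) * I)
    with hc_def
  have hRHS : (∑' n : ℤ, cexp (-π / ((β / π : ℝ) : ℂ) * ((n:ℂ) + I * ((β * t / π : ℝ) : ℂ)) ^ 2)) =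
      cexp ((β * t ^ 2 : ℝ)) * ∑' n : ℤ, c n := by
    rw [← tsum_mul_left]
    refine tsum_congr fun n => ?_
    rw [← Complex.exp_add]
    congr 1
    have hb : (β:ℂ) ≠ 0 := by exact_mod_cast hβ.ne'
    have : (π:ℂ) ≠ 0 := by exact_mod_cast hπ.ne'
    push_cast
    field_simp
    ring_nf
    rw [I_sq]
    ring
  rw [hLHS, hRHS, ← mul_assoc] at H
  have hexp : cexp ((β * t ^ 2 : ℝ)) ≠ 0 := Complex.exp_ne_zero _
  have hpow : (((β / π : ℝ) : ℂ) ^ (1/2 : ℂ)) = ((Real.sqrt (β / π) : ℝ) : ℂ) := by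
    rw [Real.sqrt_eq_rpow, show (1/2:ℂ) = ((1/2:ℝ):ℂ) by norm_num,
      ← Complex.ofReal_cpow ha.le]
  rw [hpow] at H
  set p := Real.sqrt (β / π) with hp_def
  have hp : 0 < p := Real.sqrt_pos.mpr ha
  have hpC : (p:ℂ) ≠ 0 := by exact_mod_cast hp.ne'
  have H2 : (∑' k : ℤ, cexp ((-β * ((k : ℝ) - t) ^ 2 : ℝ))) = (1/(p:ℂ)) * ∑' n, c n := by
    apply mul_left_cancel₀ hexp
    linear_combination H
  -- summability
  have hnorm : ∀ n : ℤ, ‖c n‖ = Real.exp (-(π ^ 2 / β) * (n:ℝ) ^ 2) := by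
    intro n
    rw [hc_def, Complex.norm_exp]
    congr 1
    rw [Complex.add_re, Complex.ofReal_re, Complex.mul_re, Complex.ofReal_re, Complex.ofReal_im,
      Complex.I_re, Complex.I_im]
    ring
  have hgs : Summable fun n : ℤ => Real.exp (-(π ^ 2 / β) * (n:ℝ) ^ 2) :=
    summable_gauss (div_pos (pow_pos hπ 2) hβ)
  have hcs : Summable c := by
    apply Summable.of_norm
    exact hgs.congr fun n => (hnorm n).symm
  have hc0 : c 0 = 1 := by simp [hc_def]
  have hite_eq : (fun n : ℤ => if n = 0 then 0 else c n) = Function.update c 0 0 := by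
    funext n
    simp [Function.update]
  have hites : Summable fun n : ℤ => if n = 0 then 0 else c n := by
    rw [hite_eq]; exact hcs.update 0 0
  have hS : ((∑' k : ℤ, Real.exp (-β * ((k:ℝ) - t) ^ 2) : ℝ) : ℂ) =
      ∑' k : ℤ, cexp ((-β * ((k : ℝ) - t) ^ 2 : ℝ)) := by
    rw [Complex.ofReal_tsum]
    exact tsum_congr fun k => by rw [Complex.ofReal_exp]
  have hsplit := Summable.tsum_eq_add_tsum_ite hcs 0
  have hmain : ((p * (∑' k : ℤ, Real.exp (-β * ((k:ℝ) - t) ^ 2)) - 1 : ℝ) : ℂ) =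
      ∑' n : ℤ, (if n = 0 then 0 else c n) := by
    rw [Complex.ofReal_sub, Complex.ofReal_mul, Complex.ofReal_one, hS, H2, ← mul_assoc,
      mul_one_div, div_self hpC, one_mul, hsplit, hc0]
    ring
  calc |p * (∑' k : ℤ, Real.exp (-β * ((k:ℝ) - t) ^ 2)) - 1|
      = ‖((p * (∑' k : ℤ, Real.exp (-β * ((k:ℝ) - t) ^ 2)) - 1 : ℝ) : ℂ)‖ := by
        rw [Complex.norm_real]; rfl
    _ = ‖∑' n : ℤ, (if n = 0 then 0 else c n)‖ := by rw [hmain]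
    _ ≤ ∑' n : ℤ, ‖(if n = 0 then 0 else c n)‖ := by
        apply norm_tsum_le_tsum_norm
        exact (summable_norm_iff).mpr hites
    _ = ∑' n : ℤ, (if n = 0 then 0 else Real.exp (-(π ^ 2 / β) * (n:ℝ) ^ 2)) := by
        refine tsum_congr fun n => ?_
        by_cases h : n = 0 <;> simp [h, hnorm n]
    _ = (∑' n : ℤ, Real.exp (-(π ^ 2 / β) * (n : ℝ) ^ 2)) - 1 := by
        rw [Summable.tsum_eq_add_tsum_ite hgs 0]
        simp

theorem approximate_two_scale (α : ℝ) (hα : 0 < α) (x : ℝ) :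
    |Real.sqrt (α / π) * Real.exp (-α * x^2) -
        Real.sqrt (4 * α / (3 * π)) *
          ∑' k : ℤ, Real.exp (-α * (k : ℝ)^2 / 3) *
            (Real.sqrt (α / π) * Real.exp (-α * (2 * x - (k : ℝ))^2))| ≤
      ((∑' n : ℤ, Real.exp (-(3 * π^2 / (4 * α)) * (n : ℝ)^2)) - 1) *
        (Real.sqrt (α / π) * Real.exp (-α * x^2)) := by
  have hπ : (0:ℝ) < π := pi_pos
  set A := Real.sqrt (α / π) * Real.exp (-α * x ^ 2) with hA_def
  have hA : 0 ≤ A := by positivity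
  have hterm : ∀ k : ℤ, Real.exp (-α * (k : ℝ)^2 / 3) *
      (Real.sqrt (α / π) * Real.exp (-α * (2 * x - (k : ℝ))^2)) =
      A * Real.exp (-(4 * α / 3) * ((k : ℝ) - 3 * x / 2) ^ 2) := by
    intro k
    have h : Real.exp (-α * (k : ℝ)^2 / 3) * Real.exp (-α * (2 * x - (k : ℝ))^2) =
        Real.exp (-α * x ^ 2) * Real.exp (-(4 * α / 3) * ((k : ℝ) - 3 * x / 2) ^ 2) := by
      rw [← Real.exp_add, ← Real.exp_add]
      congr 1
      ring
    rw [hA_def]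
    linear_combination Real.sqrt (α / π) * h
  rw [tsum_congr hterm, tsum_mul_left]
  have hβ : (0:ℝ) < 4 * α / 3 := by positivity
  have hkey := key (4 * α / 3) hβ (3 * x / 2)
  have hq : Real.sqrt (4 * α / (3 * π)) = Real.sqrt (4 * α / 3 / π) := by
    congr 1
    ring
  have hε : (∑' n : ℤ, Real.exp (-(3 * π^2 / (4 * α)) * (n : ℝ)^2)) =
      ∑' n : ℤ, Real.exp (-(π ^ 2 / (4 * α / 3)) * (n : ℝ) ^ 2) := by
    refine tsum_congr fun n => ?_
    congr 2
    field_simp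
  rw [hq, hε]
  have habs : |A - Real.sqrt (4 * α / 3 / π) *
      (A * ∑' k : ℤ, Real.exp (-(4 * α / 3) * ((k : ℝ) - 3 * x / 2) ^ 2))| =
      A * |Real.sqrt (4 * α / 3 / π) *
        (∑' k : ℤ, Real.exp (-(4 * α / 3) * ((k : ℝ) - 3 * x / 2) ^ 2)) - 1| := by
    rw [← _root_.abs_of_nonneg hA, ← abs_mul, _root_.abs_of_nonneg hA, abs_sub_comm]
    congr 1
    ring
  rw [habs, mul_comm _ A]
  exact mul_le_mul_of_nonneg_left hkey hA
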